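/- Let T be the 2×2 integer matrix with entries T₁₁ = n, T₁₂ = 0, T₂₁ = t, T₂₂ = m, where |n| ≥ |m| ≥ 2 and t ∈ {0,1}. Let D ⊆ S with q = #D ≥ 2, and assume D is not eigen-collinear. Let r = #{ j : (i,j)ᵀ ∈ D for some i }. If q ≤ |m| and log_{|m|} r + log_{|n|}(q/r) ≠ log_{|m|} q, then F(T,D) is disconnected. -/

import Mathlib

open Matrix

/-- The canonical cast of an integer vector to a real vector. -/
def castVec {k : ℕ} (d : Fin k → ℤ) : Fin k → ℝ := fun i => (d i : ℝ)

/-- The lower triangular matrix `[[n, 0], [t, m]]`, as a real matrix. -/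
noncomputable def Tmat (n t m : ℤ) : Matrix (Fin 2) (Fin 2) ℝ :=
  !![(n : ℝ), 0; (t : ℝ), (m : ℝ)]

/-- `d` belongs to `S = {(i,j)ᵀ : 0 ≤ i ≤ |n|-1, 0 ≤ j ≤ |m|-1}`. -/
def InS (n m : ℤ) (d : Fin 2 → ℤ) : Prop :=
  0 ≤ d 0 ∧ d 0 ≤ |n| - 1 ∧ 0 ≤ d 1 ∧ d 1 ≤ |m| - 1

/-- `D` is eigen-collinear for `M`: there are an eigenvector `v` of `M` and `d₀ ∈ D`
with `D - d₀ ⊆ ℝv`. -/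
def EigenCollinear (M : Matrix (Fin 2) (Fin 2) ℝ) (D : Finset (Fin 2 → ℤ)) : Prop :=
  ∃ v : Fin 2 → ℝ, v ≠ 0 ∧ (∃ μ : ℝ, M *ᵥ v = μ • v) ∧
    ∃ d₀ ∈ D, ∀ d ∈ D, ∃ c : ℝ, castVec d - castVec d₀ = c • v

open Pointwise MeasureTheory in
lemma Tmat_mulVec_inv (n t m : ℤ) (hn : n ≠ 0) (hm : m ≠ 0) (z : Fin 2 → ℝ) :
    Tmat n t m *ᵥ ((Tmat n t m)⁻¹ *ᵥ z) = z := by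
  rw [Matrix.mulVec_mulVec, Matrix.mul_nonsing_inv, Matrix.one_mulVec]
  rw [Tmat, Matrix.det_fin_two_of]
  simp
  exact ⟨hn, hm⟩

lemma Tmat_mulVec_fst (n t m : ℤ) (z : Fin 2 → ℝ) : (Tmat n t m *ᵥ z) 0 = n * z 0 := by
  simp [Tmat, Matrix.mulVec, dotProduct, Fin.sum_univ_two]

open Pointwise in
theorem stmt3 (n m t : ℤ) (hnm : |m| ≤ |n|) (hm : 2 ≤ |m|) (ht : t = 0 ∨ t = 1)
    (D : Finset (Fin 2 → ℤ)) (hDS : ∀ d ∈ D, InS n m d) (hq : 2 ≤ D.card)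
    (hec : ¬ EigenCollinear (Tmat n t m) D)
    (F : Set (Fin 2 → ℝ)) (hne : F.Nonempty) (hcpt : IsCompact F)
    (hfix : F = ⋃ d ∈ D, (fun x => (Tmat n t m)⁻¹ *ᵥ (x + castVec d)) '' F)
    (r : ℕ) (hr : r = (D.image fun d => d 1).card)
    (hqm : (D.card : ℤ) ≤ |m|)
    (hlog : Real.logb ((|m| : ℤ) : ℝ) (r : ℝ) +
        Real.logb ((|n| : ℤ) : ℝ) ((D.card : ℝ) / (r : ℝ)) ≠
      Real.logb ((|m| : ℤ) : ℝ) (D.card : ℝ)) :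
    ¬ IsConnected F := by
  intro hconn
  -- basic nonvanishing
  have hm0 : m ≠ 0 := by
    intro h; rw [h, abs_zero] at hm; linarith
  have hn0 : n ≠ 0 := by
    intro h; rw [h, abs_zero] at hnm
    have := abs_nonneg m; linarith
  have hnR : (n:ℝ) ≠ 0 := Int.cast_ne_zero.mpr hn0
  have hmR : (m:ℝ) ≠ 0 := Int.cast_ne_zero.mpr hm0
  -- from hlog : r < D.card
  have hDne : D.Nonempty := Finset.card_pos.mp (lt_of_lt_of_le (by norm_num) hq)
  have hq0 : D.card ≠ 0 := Nat.pos_iff_ne_zero.mp (Finset.card_pos.mpr hDne)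
  have hqR : (D.card:ℝ) ≠ 0 := Nat.cast_ne_zero.mpr hq0
  have hr1 : 1 ≤ r := by
    rw [hr]; exact Finset.card_pos.mpr (hDne.image _)
  have hr0 : (r:ℝ) ≠ 0 := Nat.cast_ne_zero.mpr (Nat.one_le_iff_ne_zero.mp hr1)
  have hrq : r ≤ D.card := by rw [hr]; exact Finset.card_image_le
  have hrlt : r < D.card := by
    rcases lt_or_eq_of_le hrq with h | h
    · exact h
    · exact absurd (by rw [h, div_self hqR, Real.logb_one, add_zero]) hlog
  -- from hlog : |m| < |n|
  have hmn : |m| < |n| := by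
    rcases lt_or_eq_of_le hnm with h | h
    · exact h
    · refine absurd ?_ hlog
      rw [← h, ← Real.logb_mul hr0 (div_ne_zero hqR hr0), mul_div_cancel₀ _ hr0]
  -- the projection A of F on the first coordinate
  obtain ⟨A, hA⟩ : ∃ A : Set ℝ, A = (fun x : Fin 2 → ℝ => x 0) '' F := ⟨_, rfl⟩
  have hAconn : IsConnected A := hA ▸ hconn.image _ (continuous_apply 0).continuousOn
  have hAcpt : IsCompact A := hA ▸ hcpt.image (continuous_apply 0)
  -- the set of first digits
  obtain ⟨I, hI⟩ : ∃ I : Finset ℤ, I = D.image fun d => d 0 := ⟨_, rfl⟩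
  -- self-similarity: forward inclusion
  have key : ∀ x ∈ F, ∃ d ∈ D, ∃ y ∈ F, x 0 = (y 0 + (d 0 : ℝ)) / n := by
    intro x hx
    rw [hfix] at hx
    simp only [Set.mem_iUnion, Set.mem_image] at hx
    obtain ⟨d, hd, y, hy, hxy⟩ := hx
    refine ⟨d, hd, y, hy, ?_⟩
    have h1 : Tmat n t m *ᵥ x = y + castVec d := by
      rw [← hxy]; exact Tmat_mulVec_inv n t m hn0 hm0 _
    have h2 : (n:ℝ) * x 0 = y 0 + (d 0 : ℝ) := by
      have := congrFun h1 0
      rwa [Tmat_mulVec_fst] at this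
    field_simp [← h2]
    linarith
  -- self-similarity: each map sends A into A
  have key2 : ∀ d ∈ D, ∀ a ∈ A, (a + (d 0 : ℝ)) / n ∈ A := by
    intro d hd a ha
    rw [hA] at ha ⊢
    obtain ⟨y, hy, rfl⟩ := ha
    have hxF : (Tmat n t m)⁻¹ *ᵥ (y + castVec d) ∈ F := by
      rw [hfix]
      simp only [Set.mem_iUnion, Set.mem_image]
      exact ⟨d, hd, y, hy, rfl⟩
    refine ⟨_, hxF, ?_⟩
    have h1 : Tmat n t m *ᵥ ((Tmat n t m)⁻¹ *ᵥ (y + castVec d)) = y + castVec d :=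
      Tmat_mulVec_inv n t m hn0 hm0 _
    have h2 := congrFun h1 0
    rw [Tmat_mulVec_fst] at h2
    have h3 : (n:ℝ) * ((Tmat n t m)⁻¹ *ᵥ (y + castVec d)) 0 = y 0 + (d 0 : ℝ) := h2
    field_simp [← h3]
    linarith
  -- two distinct digits
  have htwo : ∃ d ∈ D, ∃ d' ∈ D, d 0 ≠ d' 0 := by
    by_contra h
    push_neg at h
    have heq : r = D.card := by
      rw [hr]
      apply Finset.card_image_of_injOn
      intro d hd d' hd' h11
      funext i
      fin_cases i
      · exact h d hd d' hd'
      · exact h11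
    exact absurd heq (Nat.ne_of_lt hrlt)
  obtain ⟨d₁, hd₁, d₂, hd₂, hd12⟩ := htwo
  -- A has two distinct points
  obtain ⟨x₀, hx₀⟩ := hne
  have ha₀ : x₀ 0 ∈ A := by rw [hA]; exact ⟨x₀, hx₀, rfl⟩
  have hab : ∃ a ∈ A, ∃ b ∈ A, a ≠ b := by
    refine ⟨(x₀ 0 + (d₁ 0 : ℝ)) / n, key2 d₁ hd₁ _ ha₀,
      (x₀ 0 + (d₂ 0 : ℝ)) / n, key2 d₂ hd₂ _ ha₀, ?_⟩
    intro h
    rw [div_eq_div_iff hnR hnR] at h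
    apply hd12
    have h2 := mul_right_cancel₀ hnR h
    have h3 : ((d₁ 0 : ℝ)) = (d₂ 0 : ℝ) := by linarith
    exact_mod_cast h3
  obtain ⟨a, haA, b, hbA, hne'⟩ := hab
  -- A contains an interval, hence has positive measure
  have hIcc : Set.Icc (min a b) (max a b) ⊆ A := by
    apply hAconn.isPreconnected.Icc_subset
    · rcases min_choice a b with h | h <;> rw [h] <;> assumption
    · rcases max_choice a b with h | h <;> rw [h] <;> assumption
  have hpos : 0 < MeasureTheory.volume A := by
    calc (0 : ENNReal) < MeasureTheory.volume (Set.Icc (min a b) (max a b)) := by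
          rw [Real.volume_Icc]
          apply ENNReal.ofReal_pos.mpr
          rcases hne'.lt_or_gt with h | h
          · rw [min_eq_left h.le, max_eq_right h.le]; linarith
          · rw [min_eq_right h.le, max_eq_left h.le]; linarith
      _ ≤ MeasureTheory.volume A := MeasureTheory.measure_mono hIcc
  have hfin : MeasureTheory.volume A < ⊤ := hAcpt.measure_lt_top
  -- covering: A ⊆ ⋃_{i ∈ I} (A + i)/n
  have hcover : A ⊆ ⋃ i ∈ I, (fun y : ℝ => (y + (i:ℝ)) / n) '' A := by
    intro a ha
    rw [hA] at ha
    obtain ⟨x, hx, rfl⟩ := ha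
    obtain ⟨d, hd, y, hy, hxy⟩ := key x hx
    simp only [Set.mem_iUnion, Set.mem_image]
    exact ⟨d 0, hI ▸ Finset.mem_image_of_mem _ hd, y 0, by rw [hA]; exact ⟨y, hy, rfl⟩, hxy.symm⟩
  -- measure of each piece
  have hpiece : ∀ i : ℤ, MeasureTheory.volume ((fun y : ℝ => (y + (i:ℝ)) / n) '' A)
      = ENNReal.ofReal |(n:ℝ)|⁻¹ * MeasureTheory.volume A := by
    intro i
    have himg : (fun y : ℝ => (y + (i:ℝ)) / n) '' A
        = (fun y : ℝ => y + (i:ℝ)/n) '' ((n:ℝ)⁻¹ • A) := by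
      rw [← Set.image_smul, Set.image_image]
      apply Set.image_congr
      intro y _
      rw [smul_eq_mul]; field_simp
    rw [himg, Set.image_add_right, MeasureTheory.measure_preimage_add_right,
      MeasureTheory.Measure.addHaar_smul]
    congr 1
    rw [Module.finrank_self, pow_one, abs_inv]
  -- conclude
  have hIcard : (I.card : ℝ) < |(n:ℝ)| := by
    have h1 : I.card ≤ D.card := hI ▸ Finset.card_image_le
    have h2 : (I.card : ℤ) < |n| := by
      calc (I.card : ℤ) ≤ (D.card : ℤ) := Int.ofNat_le.mpr h1
        _ ≤ |m| := hqm
        _ < |n| := hmn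
    calc (I.card : ℝ) = ((I.card : ℤ) : ℝ) := by norm_num
      _ < (|n| : ℤ) := by exact_mod_cast h2
      _ = |(n:ℝ)| := by rw [Int.cast_abs]
  have hbound : MeasureTheory.volume A
      ≤ (I.card : ENNReal) * (ENNReal.ofReal |(n:ℝ)|⁻¹ * MeasureTheory.volume A) := by
    calc MeasureTheory.volume A
        ≤ ∑ i ∈ I, MeasureTheory.volume ((fun y : ℝ => (y + (i:ℝ)) / n) '' A) :=
          (MeasureTheory.measure_mono hcover).trans
            (MeasureTheory.measure_biUnion_finset_le I _)
      _ = (I.card : ENNReal) * (ENNReal.ofReal |(n:ℝ)|⁻¹ * MeasureTheory.volume A) := by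
          rw [Finset.sum_congr rfl fun i _ => hpiece i, Finset.sum_const, nsmul_eq_mul]
  have hcontr : (I.card : ENNReal) * ENNReal.ofReal |(n:ℝ)|⁻¹ < 1 := by
    have hnabs : (0:ℝ) < |(n:ℝ)| := abs_pos.mpr hnR
    rw [← ENNReal.ofReal_natCast, ← ENNReal.ofReal_mul (p := (I.card : ℝ)) (Nat.cast_nonneg _)]
    apply ENNReal.ofReal_lt_one.mpr
    rw [mul_inv_lt_iff₀ hnabs, one_mul]
    exact hIcard
  have hfinal : MeasureTheory.volume A < MeasureTheory.volume A := by
    calc MeasureTheory.volume A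
        ≤ (I.card : ENNReal) * ENNReal.ofReal |(n:ℝ)|⁻¹ * MeasureTheory.volume A := by
          rw [mul_assoc]; exact hbound
      _ < 1 * MeasureTheory.volume A :=
          ENNReal.mul_lt_mul_left hpos.ne' hfin.ne hcontr
      _ = MeasureTheory.volume A := one_mul _
  exact absurd hfinal (lt_irrefl _)
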